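/- Let s, m, m' be positive integers with m ≤ m', let p ∈ 𝔽₂[x] with deg(p) = m', and let q = (q_1,…,q_s) ∈ 𝔽₂[x]^s. For 0 ≤ n < 2^m, identify n with the polynomial n(x) = n_0 + n_1 x + ⋯ ∈ 𝔽₂[x] via its binary digits n = n_0 + n_1·2 + ⋯, and set x_{n,j} = v_{m'}(n q_j / p). Then for every k = (k_1,…,k_s) ∈ ℕ₀^s, the quantity 2^{−m} Σ_{n=0}^{2^m−1} ∏_{j=1}^{s} wal_{k_j}(x_{n,j}) equals 1 if k ∈ D^⊥(q,p) and equals 0 otherwise. -/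

import Mathlib

open scoped BigOperators

attribute [local instance] Classical.propDecidable

noncomputable section

/-- `mu α k` is μ_α(k): with k = 2^{a_1−1} + ⋯ + 2^{a_v−1}, a_1 > ⋯ > a_v > 0, the sum
a_1 + ⋯ + a_{min(α,v)}; μ_α(0) = 0. -/
def mu (α k : ℕ) : ℕ :=
  (((((List.range (k+1)).filter (fun i => k.testBit i)).reverse).take α).map (· + 1)).sum

/-- The set E of positive integers with even binary sum-of-digits. -/
def Eset : Set ℕ := {k | 1 ≤ k ∧ Even ((Nat.digits 2 k).sum)}

/-- tr_{m'}(k) = κ_0 + κ_1 x + ⋯ + κ_{m'−1} x^{m'−1} ∈ 𝔽₂[x]. -/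
def trunc (m' k : ℕ) : Polynomial (ZMod 2) :=
  ∑ i ∈ Finset.range m', Polynomial.monomial i (if k.testBit i then 1 else 0)

/-- The polynomial n(x) ∈ 𝔽₂[x] associated to n ∈ ℕ via its binary digits. -/
def nPoly (n : ℕ) : Polynomial (ZMod 2) := trunc (n+1) n

/-- C_1 = 1/2, C_τ = 2^{−τ}(5/3)^{τ−2} for τ ≥ 2. -/
def Cconst (τ : ℕ) : ℝ := if τ = 1 then 1/2 else (2:ℝ)^(-(τ:ℝ)) * (5/3:ℝ)^((τ:ℝ)-2)

/-- C'_{α,ν} = Σ_{τ=ν}^{α} C_τ² 2^{−2(τ−ν)}. -/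
def Cprime (α ν : ℕ) : ℝ :=
  ∑ τ ∈ Finset.Icc ν α, (Cconst τ)^2 * (2:ℝ)^(-(2:ℝ)*((τ:ℝ)-(ν:ℝ)))

/-- C̃_{2α} = 2^{−2α+1}(5/3)^{2α−2}. -/
def Ctilde (α : ℕ) : ℝ := (2:ℝ)^(-(2:ℝ)*(α:ℝ)+1) * (5/3:ℝ)^(2*(α:ℝ)-2)

/-- D_α = max_{1≤ν≤α} (C'_{α,ν} + C̃_{2α} 2^{−2(α−ν)}). -/
def Dconst (α : ℕ) : ℝ :=
  sSup {x : ℝ | ∃ ν, 1 ≤ ν ∧ ν ≤ α ∧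
    x = Cprime α ν + Ctilde α * (2:ℝ)^(-(2:ℝ)*((α:ℝ)-(ν:ℝ)))}

/-- A_{α,λ,1}. -/
def A1 (α : ℕ) (lam : ℝ) : ℝ :=
  (∑ v ∈ Finset.Icc 1 (α-1), ∏ i ∈ Finset.Icc 1 v, (1 / ((2:ℝ)^(2*lam*(i:ℝ)) - 1)))
  + (1/((2:ℝ)^(2*lam*(α:ℝ)) - 2)) * ∏ i ∈ Finset.Icc 1 (α-1), 1/((2:ℝ)^(2*lam*(i:ℝ)) - 1)

/-- A_{α,λ,2}. -/
def A2 (α : ℕ) (lam : ℝ) : ℝ :=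
  (∑ v ∈ Finset.Icc 1 ((α-1)/2), ∏ i ∈ Finset.Icc 1 (2*v),
      ((2:ℝ)^(2*lam) / ((2:ℝ)^(2*lam*(i:ℝ)) - 1)))
  + ((2:ℝ)^(2*lam)/((2:ℝ)^(2*lam*(α:ℝ)) - 2)) *
      ∏ i ∈ Finset.Icc 1 (α-1), (2:ℝ)^(2*lam)/((2:ℝ)^(2*lam*(i:ℝ)) - 1)

/-- Membership of a d-dimensional frequency vector k in the dual polynomial lattice
D^⊥(q,p): tr_{m'}(k_1)q_1 + ⋯ + tr_{m'}(k_d)q_d ≡ a (mod p) with deg(a) < m'−m. -/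
def inDual (m m' d : ℕ) (q : ℕ → Polynomial (ZMod 2)) (p : Polynomial (ZMod 2))
    (k : ℕ → ℕ) : Prop :=
  ∃ a : Polynomial (ZMod 2), a.degree < ((m' - m : ℕ) : WithBot ℕ) ∧
    p ∣ ((∑ j ∈ Finset.range d, trunc m' (k j) * q j) - a)

/-- The inner sum Σ_{k_u ∈ E^{|u|}, (k_u,0) ∈ D^⊥(q,p)} ∏_{j∈u} 2^{−2μ_α(⌊k_j/2⌋)}
(in dimension d). -/
def dualSum (m m' α d : ℕ) (q : ℕ → Polynomial (ZMod 2)) (p : Polynomial (ZMod 2))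
    (u : Finset ℕ) : ℝ :=
  ∑' k : (↥u → ℕ),
    if (∀ j, (k j) ∈ Eset) ∧
        inDual m m' d q p (fun j => if h : j ∈ u then k ⟨j, h⟩ else 0)
    then ∏ j, (2:ℝ)^(-(2:ℝ) * (mu α (k j / 2) : ℝ)) else 0

/-- The quality criterion B_{α,γ}(q,p) in dimension d (coordinates indexed 0,…,d−1). -/
def Bcrit (d m m' α : ℕ) (γ : Finset ℕ → ℝ) (q : ℕ → Polynomial (ZMod 2))
    (p : Polynomial (ZMod 2)) : ℝ :=
  ∑ u ∈ (Finset.range d).powerset.filter (· ≠ ∅),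
    γ u * Dconst α ^ u.card * dualSum m m' α d q p u

/-- ξ_i digit of the dyadic rational x = l/2^{m'} (with ξ_i = 0 for i > m'). -/
def xi (m' l i : ℕ) : ℕ := if 1 ≤ i ∧ i ≤ m' ∧ l.testBit (m' - i) then 1 else 0

/-- Walsh function value wal_k(l/2^{m'}) = (−1)^{ξ_1κ_0 + ξ_2κ_1 + ⋯}. -/
def wal (m' l k : ℕ) : ℝ :=
  (-1:ℝ) ^ (∑ i ∈ Finset.range (k+1), (if k.testBit i then xi m' l (i+1) else 0))

/-- ω_α(l/2^{m'}) = Σ_{k∈E} 2^{−2μ_α(⌊k/2⌋)} wal_k(l/2^{m'}). -/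
def omega (α m' l : ℕ) : ℝ :=
  ∑' k : ↥Eset, (2:ℝ)^(-(2:ℝ) * (mu α ((k:ℕ)/2) : ℝ)) * wal m' l (k:ℕ)

/-- The numerator L ∈ {0,…,2^{m'}−1} such that v_{m'}(f/p) = L/2^{m'}: the l-th binary
digit t_l of v_{m'}(f/p) is the constant coefficient of (f·x^l) div p. -/
def vnum (m' : ℕ) (f p : Polynomial (ZMod 2)) : ℕ :=
  ∑ l ∈ Finset.Icc 1 m', (if ((f * Polynomial.X ^ l) / p).coeff 0 = 1 then 2^(m' - l) else 0)

/-- The polynomial in G_{m'} with coefficient vector c. -/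
def polyOf {n : ℕ} (c : Fin n → ZMod 2) : Polynomial (ZMod 2) :=
  ∑ i : Fin n, Polynomial.monomial (i : ℕ) (c i)

/-- Strictly decreasing v-tuples of positive integers a_1 > ⋯ > a_v > 0. -/
def decTuples (v : ℕ) : Type := {a : Fin v → ℕ // StrictAnti a ∧ ∀ i, 0 < a i}

end
namespace Stmt16Aux
open Polynomial Finset

lemma zmod2_cases (x : ZMod 2) : x = 0 ∨ x = 1 := by revert x; decide

lemma sum_pow_lt (N : ℕ) (P : ℕ → Prop) [DecidablePred P] :
    (∑ i ∈ Finset.range N, if P i then 2^i else 0) < 2^N := by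
  classical
  induction N with
  | zero => simp
  | succ N ih =>
    rw [Finset.sum_range_succ, pow_succ]
    have h : (if P N then 2^N else 0) ≤ 2^N := by split <;> omega
    omega

lemma testBit_sum_pow (N : ℕ) (P : ℕ → Prop) [DecidablePred P] (j : ℕ) :
    ((∑ i ∈ Finset.range N, if P i then 2^i else 0).testBit j = true) ↔ (j < N ∧ P j) := by
  classical
  induction N with
  | zero => simp
  | succ N ih =>
    rw [Finset.sum_range_succ]
    have hS := sum_pow_lt N P
    rw [show (∑ i ∈ Finset.range N, if P i then 2^i else 0) + (if P N then 2^N else 0)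
        = 2^N * (if P N then 1 else 0) + (∑ i ∈ Finset.range N, if P i then 2^i else 0) by
      split <;> ring, Nat.testBit_two_pow_mul_add _ hS]
    rcases lt_trichotomy j N with hj | rfl | hj
    · rw [if_pos hj, ih]
      exact ⟨fun ⟨_, h⟩ => ⟨Nat.lt_succ_of_lt hj, h⟩, fun ⟨_, h⟩ => ⟨hj, h⟩⟩
    · rw [if_neg (lt_irrefl j), Nat.sub_self]
      by_cases hP : P j
      · simp [hP]
      · rw [if_neg hP]; simp [Nat.zero_testBit, hP]
    · rw [if_neg (by omega)]
      have h2 : (if P N then 1 else 0) < 2^(j - N) := by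
        have h0 : 0 < j - N := by omega
        have h1 : 2 ≤ 2^(j-N) := by
          calc 2 = 2^1 := rfl
          _ ≤ 2^(j-N) := Nat.pow_le_pow_right (by norm_num) h0
        split <;> omega
      rw [Nat.testBit_lt_two_pow h2]
      constructor
      · intro h; simp at h
      · rintro ⟨h3, -⟩; omega

lemma vnum_eq (m' : ℕ) (f p : Polynomial (ZMod 2)) :
    vnum m' f p = ∑ i ∈ Finset.range m',
      (if ((f * Polynomial.X ^ (m' - i)) / p).coeff 0 = 1 then 2^i else 0) := by
  unfold vnum
  refine Finset.sum_nbij' (fun l => m' - l) (fun i => m' - i) ?_ ?_ ?_ ?_ ?_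
  · intro a ha; simp only [Finset.mem_Icc] at ha; simp only [Finset.mem_range]; omega
  · intro a ha; simp only [Finset.mem_range] at ha; simp only [Finset.mem_Icc]; omega
  · intro a ha; simp only [Finset.mem_Icc] at ha; show m' - (m' - a) = a; omega
  · intro a ha; simp only [Finset.mem_range] at ha; show m' - (m' - a) = a; omega
  · intro a ha; simp only [Finset.mem_Icc] at ha
    rw [show m' - (m' - a) = a by omega]

lemma xi_vnum (m' : ℕ) (f p : Polynomial (ZMod 2)) (l : ℕ) (h1 : 1 ≤ l) (h2 : l ≤ m') :
    xi m' (vnum m' f p) l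
      = if ((f * Polynomial.X ^ l) / p).coeff 0 = 1 then 1 else 0 := by
  unfold xi
  rw [vnum_eq]
  by_cases hc : ((f * Polynomial.X ^ l) / p).coeff 0 = 1
  · rw [if_pos hc, if_pos]
    refine ⟨h1, h2, ?_⟩
    rw [testBit_sum_pow]
    refine ⟨by omega, ?_⟩
    rw [show m' - (m' - l) = l by omega]
    exact hc
  · rw [if_neg hc, if_neg]
    rintro ⟨-, -, h3⟩
    rw [testBit_sum_pow] at h3
    rw [show m' - (m' - l) = l by omega] at h3
    exact hc h3.2

end Stmt16Aux

namespace Stmt16Aux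
open Polynomial Finset

variable {p : Polynomial (ZMod 2)}

lemma add_divByMonic (hp : p.Monic) (f g : Polynomial (ZMod 2)) :
    (f + g) /ₘ p = f /ₘ p + g /ₘ p := by
  refine (Polynomial.div_modByMonic_unique (f /ₘ p + g /ₘ p) (f %ₘ p + g %ₘ p) hp
    ⟨?_, ?_⟩).1
  · have h1 := Polynomial.modByMonic_add_div f p
    have h2 := Polynomial.modByMonic_add_div g p
    linear_combination h1 + h2
  · refine lt_of_le_of_lt (Polynomial.degree_add_le _ _) (max_lt ?_ ?_) <;>
      exact Polynomial.degree_modByMonic_lt _ hp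

/-- The additive map f ↦ (f /ₘ p).coeff 0. -/
noncomputable def tch (p : Polynomial (ZMod 2)) (hp : p.Monic) : Polynomial (ZMod 2) →+ ZMod 2 where
  toFun f := (f /ₘ p).coeff 0
  map_zero' := by
    show ((0 : Polynomial (ZMod 2)) /ₘ p).coeff 0 = 0
    rw [Polynomial.zero_divByMonic, Polynomial.coeff_zero]
  map_add' f g := by
    show ((f + g) /ₘ p).coeff 0 = (f /ₘ p).coeff 0 + (g /ₘ p).coeff 0
    rw [add_divByMonic hp, Polynomial.coeff_add]

lemma tch_apply (hp : p.Monic) (f : Polynomial (ZMod 2)) :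
    tch p hp f = (f /ₘ p).coeff 0 := rfl

/-- For degree h ≤ m' = deg p, (h /ₘ p).coeff 0 = h.coeff m'. -/
lemma divCoeff (hp : p.Monic) {m' : ℕ} (hdeg : p.natDegree = m')
    (h : Polynomial (ZMod 2)) (hh : h.degree ≤ (m' : WithBot ℕ)) :
    (h /ₘ p).coeff 0 = h.coeff m' := by
  have hC := Polynomial.div_modByMonic_unique (g := p) (f := h)
      (Polynomial.C (h.coeff m')) (h - Polynomial.C (h.coeff m') * p) hp ⟨by ring, ?_⟩
  · rw [hC.1, Polynomial.coeff_C_zero]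
  · rw [Polynomial.degree_eq_natDegree hp.ne_zero, hdeg]
    rw [Polynomial.degree_lt_iff_coeff_zero]
    intro i hi
    rw [Polynomial.coeff_sub, Polynomial.coeff_C_mul]
    rcases eq_or_lt_of_le hi with heq | hlt
    · rw [← heq, show p.coeff m' = 1 from by rw [← hdeg]; exact hp.coeff_natDegree]
      ring
    · have e1 : h.coeff i = 0 :=
        Polynomial.coeff_eq_zero_of_degree_lt (lt_of_le_of_lt hh (by exact_mod_cast hlt))
      have e2 : p.coeff i = 0 := Polynomial.coeff_eq_zero_of_natDegree_lt (by omega)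
      rw [e1, e2, mul_zero, sub_zero]

lemma mod_shift_coeff (hp : p.Monic) (g : Polynomial (ZMod 2)) (l : ℕ) (hl : 1 ≤ l) :
    ((g * Polynomial.X ^ l) /ₘ p).coeff 0 = (((g %ₘ p) * Polynomial.X ^ l) /ₘ p).coeff 0 := by
  conv_lhs => rw [← Polynomial.modByMonic_add_div g p]
  rw [add_mul, add_divByMonic hp, Polynomial.coeff_add, mul_assoc,
    Polynomial.mul_divByMonic_cancel_left _ hp, Polynomial.coeff_mul_X_pow']
  rw [if_neg (by omega), add_zero]

end Stmt16Aux

namespace Stmt16Aux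
open Polynomial Finset

lemma chi_add (a b : ZMod 2) :
    (if a + b = 0 then (1:ℝ) else -1)
      = (if a = 0 then (1:ℝ) else -1) * (if b = 0 then (1:ℝ) else -1) := by
  have h10 : (1 : ZMod 2) ≠ 0 := by decide
  have h110 : (1 + 1 : ZMod 2) = 0 := by decide
  rcases zmod2_cases a with rfl | rfl <;> rcases zmod2_cases b with rfl | rfl <;>
    simp [h10, h110]

lemma chi_sum {ι : Type*} (s : Finset ι) (v : ι → ZMod 2) :
    (if (∑ β ∈ s, v β) = 0 then (1:ℝ) else -1)
      = ∏ β ∈ s, (if v β = 0 then (1:ℝ) else -1) := by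
  classical
  induction s using Finset.cons_induction with
  | empty => simp
  | cons a s ha ih => rw [Finset.sum_cons, Finset.prod_cons, chi_add, ih]

lemma neg_one_pow_eq_chi (E : ℕ) :
    ((-1:ℝ))^E = if ((E : ZMod 2)) = 0 then 1 else -1 := by
  rcases Nat.even_or_odd E with h | h
  · rw [h.neg_one_pow, if_pos]
    rw [ZMod.natCast_eq_zero_iff]
    exact h.two_dvd
  · rw [h.neg_one_pow, if_neg]
    rw [ZMod.natCast_eq_zero_iff]
    rw [Nat.odd_iff] at h
    omega

lemma sum_prod_testBit (m : ℕ) (F : ℕ → Bool → ℝ) :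
    ∑ n ∈ Finset.range (2^m), ∏ β ∈ Finset.range m, F β (n.testBit β)
      = ∏ β ∈ Finset.range m, (F β false + F β true) := by
  induction m with
  | zero => simp
  | succ m ih =>
    rw [pow_succ, Nat.mul_two, Finset.sum_range_add]
    have h1 : ∀ n ∈ Finset.range (2^m),
        ∏ β ∈ Finset.range (m+1), F β (n.testBit β)
          = (∏ β ∈ Finset.range m, F β (n.testBit β)) * F m false := by
      intro n hn
      rw [Finset.prod_range_succ, Nat.testBit_lt_two_pow (Finset.mem_range.mp hn)]
    have h2 : ∀ x ∈ Finset.range (2^m),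
        ∏ β ∈ Finset.range (m+1), F β ((2^m + x).testBit β)
          = (∏ β ∈ Finset.range m, F β (x.testBit β)) * F m true := by
      intro x hx
      have hx' := Finset.mem_range.mp hx
      have hbit : ∀ β, β < m → (2^m + x).testBit β = x.testBit β := by
        intro β hβ
        rw [show 2^m + x = 2^m * 1 + x by ring, Nat.testBit_two_pow_mul_add _ hx', if_pos hβ]
      have hbitm : (2^m + x).testBit m = true := by
        rw [show 2^m + x = 2^m * 1 + x by ring, Nat.testBit_two_pow_mul_add _ hx',
          if_neg (lt_irrefl m), Nat.sub_self]
        decide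
      rw [Finset.prod_range_succ, hbitm]
      congr 1
      exact Finset.prod_congr rfl fun β hβ => by rw [hbit β (Finset.mem_range.mp hβ)]
    rw [Finset.sum_congr rfl h1, Finset.sum_congr rfl h2, ← Finset.sum_mul, ← Finset.sum_mul,
      ih, Finset.prod_range_succ]
    ring

end Stmt16Aux

namespace Stmt16Aux
open Polynomial Finset

lemma sum_range_change {M : Type*} [AddCommMonoid M] (N1 N2 : ℕ) (F : ℕ → M)
    (h1 : ∀ i, N1 ≤ i → F i = 0) (h2 : ∀ i, N2 ≤ i → F i = 0) :
    ∑ i ∈ Finset.range N1, F i = ∑ i ∈ Finset.range N2, F i := by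
  have key : ∀ a b : ℕ, a ≤ b → (∀ i, a ≤ i → F i = 0) →
      ∑ i ∈ Finset.range b, F i = ∑ i ∈ Finset.range a, F i := by
    intro a b hab hF
    exact (Finset.sum_subset (Finset.range_subset_range.mpr hab)
      (fun x _ hxa => hF x (Nat.le_of_not_lt (fun h => hxa (Finset.mem_range.mpr h))))).symm
  rw [← key N1 (max N1 N2) (le_max_left _ _) h1, key N2 (max N1 N2) (le_max_right _ _) h2]

lemma per_j (m' : ℕ) (hm' : 0 < m') {p : Polynomial (ZMod 2)} (hp : p.Monic)
    (f : Polynomial (ZMod 2)) (kk : ℕ) :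
    ((∑ i ∈ Finset.range (kk+1),
        if kk.testBit i then xi m' (vnum m' f p) (i+1) else 0 : ℕ) : ZMod 2)
      = tch p hp (f * trunc m' kk * Polynomial.X) := by
  classical
  rw [Nat.cast_sum]
  have e1 : ∀ i ∈ Finset.range (kk+1),
      ((if kk.testBit i then xi m' (vnum m' f p) (i+1) else 0 : ℕ) : ZMod 2)
        = (if kk.testBit i ∧ i < m' then tch p hp (f * Polynomial.X^(i+1)) else 0) := by
    intro i _
    by_cases hb : kk.testBit i
    · by_cases hi : i < m'
      · rw [if_pos hb, if_pos ⟨hb, hi⟩, xi_vnum m' f p (i+1) (by omega) (by omega),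
          ← Polynomial.divByMonic_eq_div _ hp, tch_apply]
        rcases zmod2_cases ((f * Polynomial.X^(i+1) /ₘ p).coeff 0) with h | h
        · rw [h, if_neg (by decide : ¬(0:ZMod 2) = 1), Nat.cast_zero]
        · rw [h, if_pos rfl, Nat.cast_one]
      · rw [if_pos hb, if_neg (fun hc => hi hc.2)]
        unfold xi
        rw [if_neg (by rintro ⟨-, h2, -⟩; omega), Nat.cast_zero]
    · rw [if_neg hb, if_neg (fun hc => hb hc.1), Nat.cast_zero]
  rw [Finset.sum_congr rfl e1]
  rw [sum_range_change (kk+1) m'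
      (fun i => if kk.testBit i ∧ i < m' then tch p hp (f * Polynomial.X^(i+1)) else 0)
      (fun i hi => by
        have hb : kk.testBit i = false := Nat.testBit_lt_two_pow
          (lt_of_lt_of_le (Nat.lt_two_pow_self (n := kk)) (Nat.pow_le_pow_right (by norm_num) (by omega)))
        simp [hb])
      (fun i hi => if_neg (fun hc => by omega))]
  have e3 : f * trunc m' kk * Polynomial.X
      = ∑ i ∈ Finset.range m', (if kk.testBit i then f * Polynomial.X^(i+1) else 0) := by
    unfold trunc
    rw [Finset.mul_sum, Finset.sum_mul]
    refine Finset.sum_congr rfl fun i _ => ?_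
    by_cases hb : kk.testBit i
    · simp only [hb, if_true]
      rw [← Polynomial.X_pow_eq_monomial, pow_succ]
      ring
    · simp only [hb, if_false, Bool.false_eq_true, Polynomial.monomial_zero_right,
        mul_zero, zero_mul]
  rw [e3, map_sum]
  refine Finset.sum_congr rfl fun i hi => ?_
  have him := Finset.mem_range.mp hi
  by_cases hb : kk.testBit i
  · rw [if_pos ⟨hb, him⟩, if_pos hb]
  · rw [if_neg (fun hc => hb hc.1), if_neg hb, map_zero]

lemma nPoly_eq (m n : ℕ) (hn : n < 2^m) :
    nPoly n = ∑ β ∈ Finset.range m,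
      (if n.testBit β then (Polynomial.X : Polynomial (ZMod 2))^β else 0) := by
  classical
  unfold nPoly trunc
  have e : ∀ β, (if n.testBit β then (Polynomial.X : Polynomial (ZMod 2))^β else 0)
      = Polynomial.monomial β (if n.testBit β then (1:ZMod 2) else 0) := by
    intro β
    by_cases hb : n.testBit β <;>
      simp [hb, Polynomial.X_pow_eq_monomial]
  rw [Finset.sum_congr rfl fun β _ => e β]
  apply sum_range_change
  · intro i hi
    have hb : n.testBit i = false := Nat.testBit_lt_two_pow
      (lt_of_lt_of_le (Nat.lt_two_pow_self (n := n)) (Nat.pow_le_pow_right (by norm_num) (by omega)))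
    simp [hb]
  · intro i hi
    have hb : n.testBit i = false := Nat.testBit_lt_two_pow
      (lt_of_lt_of_le hn (Nat.pow_le_pow_right (by norm_num) hi))
    simp [hb]

lemma per_n (s m m' : ℕ) (hm' : 0 < m') {p : Polynomial (ZMod 2)} (hp : p.Monic)
    (q : ℕ → Polynomial (ZMod 2)) (k : ℕ → ℕ) (n : ℕ) (hn : n < 2^m) :
    ∏ j ∈ Finset.range s, wal m' (vnum m' (nPoly n * q j) p) (k j)
      = if (∑ β ∈ Finset.range m, if n.testBit β then
            (((∑ j ∈ Finset.range s, trunc m' (k j) * q j) * Polynomial.X ^ (β+1)) /ₘ p).coeff 0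
          else 0) = 0 then (1:ℝ) else -1 := by
  classical
  unfold wal
  rw [Finset.prod_pow_eq_pow_sum, neg_one_pow_eq_chi]
  suffices hAB : ((∑ j ∈ Finset.range s, ∑ i ∈ Finset.range (k j+1),
      (if (k j).testBit i then xi m' (vnum m' (nPoly n * q j) p) (i+1) else 0) : ℕ) : ZMod 2)
      = ∑ β ∈ Finset.range m, if n.testBit β then
            (((∑ j ∈ Finset.range s, trunc m' (k j) * q j) * Polynomial.X ^ (β+1)) /ₘ p).coeff 0
          else 0 by rw [hAB]
  rw [Nat.cast_sum, Finset.sum_congr rfl (fun j _ => per_j m' hm' hp (nPoly n * q j) (k j))]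
  rw [← map_sum]
  have e : ∑ j ∈ Finset.range s, nPoly n * q j * trunc m' (k j) * Polynomial.X
      = nPoly n * (∑ j ∈ Finset.range s, trunc m' (k j) * q j) * Polynomial.X := by
    rw [Finset.mul_sum, Finset.sum_mul]
    exact Finset.sum_congr rfl fun j _ => by ring
  rw [e, nPoly_eq m n hn, Finset.sum_mul, Finset.sum_mul, map_sum]
  refine Finset.sum_congr rfl fun β hβ => ?_
  by_cases hb : n.testBit β
  · rw [if_pos hb, if_pos hb,
      show (Polynomial.X : Polynomial (ZMod 2))^β * (∑ j ∈ Finset.range s, trunc m' (k j) * q j)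
          * Polynomial.X
        = (∑ j ∈ Finset.range s, trunc m' (k j) * q j) * Polynomial.X^(β+1) by
        rw [pow_succ]; ring]
    rfl
  · rw [if_neg hb, if_neg hb, zero_mul, zero_mul, map_zero]

end Stmt16Aux

namespace Stmt16Aux
open Polynomial Finset

lemma equiv_dual (s m m' : ℕ) (hm : 0 < m) (hmm : m ≤ m') {p : Polynomial (ZMod 2)}
    (hp : p.Monic) (hdeg : p.natDegree = m')
    (q : ℕ → Polynomial (ZMod 2)) (k : ℕ → ℕ) :
    inDual m m' s q p k ↔ ∀ β, β < m →
      (((∑ j ∈ Finset.range s, trunc m' (k j) * q j) * Polynomial.X ^ (β+1)) /ₘ p).coeff 0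
        = 0 := by
  classical
  set g : Polynomial (ZMod 2) := ∑ j ∈ Finset.range s, trunc m' (k j) * q j with hg
  set r : Polynomial (ZMod 2) := g %ₘ p with hr
  have hpdeg : p.degree = (m' : WithBot ℕ) := by
    rw [Polynomial.degree_eq_natDegree hp.ne_zero, hdeg]
  have hrdeg : r.degree < (m' : WithBot ℕ) := by
    rw [← hpdeg]; exact Polynomial.degree_modByMonic_lt g hp
  have hdvd_gr : p ∣ g - r := by
    refine ⟨g /ₘ p, ?_⟩
    conv_lhs => rw [← Polynomial.modByMonic_add_div g p]
    ring
  constructor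
  · rintro ⟨a, ha, hdvd⟩ β hβ
    have hra : r = a := by
      have h1 : p ∣ r - a := by
        have := dvd_sub hdvd hdvd_gr
        rw [show g - a - (g - r) = r - a by ring] at this
        exact this
      by_contra hne
      have h3 : r - a ≠ 0 := sub_ne_zero.mpr hne
      have h4 := Polynomial.degree_le_of_dvd h1 h3
      have h5 : (r - a).degree < p.degree := by
        refine lt_of_le_of_lt (Polynomial.degree_sub_le _ _) (max_lt ?_ ?_)
        · rw [hpdeg]; exact hrdeg
        · rw [hpdeg]
          exact lt_of_lt_of_le ha (by exact_mod_cast Nat.cast_le.mpr (Nat.sub_le m' m))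
      exact absurd (lt_of_le_of_lt h4 h5) (lt_irrefl _)
    rw [mod_shift_coeff hp g (β+1) (by omega), ← hr, hra]
    rcases eq_or_ne a 0 with rfl | ha0
    · rw [zero_mul, Polynomial.zero_divByMonic, Polynomial.coeff_zero]
    · have hadeg : a.natDegree < m' - m := by
        rw [← Nat.cast_lt (α := WithBot ℕ), ← Polynomial.degree_eq_natDegree ha0] at *
        exact ha
      have hmul : (a * Polynomial.X^(β+1)).degree < p.degree := by
        rw [hpdeg]
        refine lt_of_le_of_lt (Polynomial.degree_mul_le _ _) ?_
        rw [Polynomial.degree_X_pow, Polynomial.degree_eq_natDegree ha0]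
        rw [← Nat.cast_add, Nat.cast_lt]
        omega
      rw [(Polynomial.divByMonic_eq_zero_iff hp).mpr hmul, Polynomial.coeff_zero]
  · intro hall
    refine ⟨r, ?_, hdvd_gr⟩
    have key2 : ∀ l, 1 ≤ l → l ≤ m → r.coeff (m' - l) = 0 := by
      intro l
      induction l using Nat.strong_induction_on with
      | _ l ih =>
        intro h1 h2
        have hcl : ((r * Polynomial.X ^ l) /ₘ p).coeff 0 = 0 := by
          have := hall (l - 1) (by omega)
          rw [show l - 1 + 1 = l by omega] at this
          rw [← mod_shift_coeff hp g l (by omega)]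
          exact this
        rcases eq_or_ne r 0 with hr0 | hr0
        · rw [hr0, Polynomial.coeff_zero]
        · have h6 : r.natDegree < m' := by
            rw [← Nat.cast_lt (α := WithBot ℕ), ← Polynomial.degree_eq_natDegree hr0]
            exact hrdeg
          have h5 : r.natDegree ≤ m' - l := by
            by_contra hgt
            push_neg at hgt
            have h7 := ih (m' - r.natDegree) (by omega) (by omega) (by omega)
            rw [show m' - (m' - r.natDegree) = r.natDegree by omega] at h7
            exact hr0 (Polynomial.leadingCoeff_eq_zero.mp h7)
          have hdeg_rXl : (r * Polynomial.X^l).degree ≤ (m' : WithBot ℕ) := by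
            refine le_trans (Polynomial.degree_mul_le _ _) ?_
            rw [Polynomial.degree_X_pow]
            refine le_trans (add_le_add_left (Polynomial.degree_le_natDegree) _) ?_
            rw [← Nat.cast_add, Nat.cast_le]
            omega
          have := divCoeff hp hdeg (r * Polynomial.X^l) hdeg_rXl
          rw [hcl] at this
          rw [Polynomial.coeff_mul_X_pow' ] at this
          rw [if_pos (by omega)] at this
          exact this.symm
    rw [Polynomial.degree_lt_iff_coeff_zero]
    intro i hi
    by_cases him : i < m'
    · have := key2 (m' - i) (by omega) (by omega)
      rw [show m' - (m' - i) = i by omega] at this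
      exact this
    · exact Polynomial.coeff_eq_zero_of_degree_lt
        (lt_of_lt_of_le hrdeg (by exact_mod_cast Nat.cast_le.mpr (by omega)))

end Stmt16Aux

namespace Stmt16Aux
open Polynomial Finset

set_option maxHeartbeats 1000000 in
theorem main (s m m' : ℕ) (hs : 0 < s) (hm : 0 < m) (hmm : m ≤ m')
    (p : Polynomial (ZMod 2)) (hdeg : p.natDegree = m')
    (q : ℕ → Polynomial (ZMod 2)) (k : ℕ → ℕ) :
    (1/(2:ℝ)^m) * ∑ n ∈ Finset.range (2^m),
        ∏ j ∈ Finset.range s, wal m' (vnum m' (nPoly n * q j) p) (k j)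
      = if inDual m m' s q p k then 1 else 0 := by
  classical
  have hm' : 0 < m' := lt_of_lt_of_le hm hmm
  have hp0 : p ≠ 0 := by
    intro h; rw [h, Polynomial.natDegree_zero] at hdeg; omega
  have hp : p.Monic := by
    have h1 : p.leadingCoeff ≠ 0 := Polynomial.leadingCoeff_ne_zero.mpr hp0
    rcases zmod2_cases p.leadingCoeff with h | h
    · exact absurd h h1
    · exact h
  set c : ℕ → ZMod 2 := fun β =>
    (((∑ j ∈ Finset.range s, trunc m' (k j) * q j) * Polynomial.X ^ (β+1)) /ₘ p).coeff 0
    with hc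
  set F : ℕ → Bool → ℝ := fun β b => if b then (if c β = 0 then (1:ℝ) else -1) else 1 with hF
  have hsum : ∑ n ∈ Finset.range (2^m),
      ∏ j ∈ Finset.range s, wal m' (vnum m' (nPoly n * q j) p) (k j)
      = ∏ β ∈ Finset.range m, ((if c β = 0 then (1:ℝ) else -1) + 1) := by
    calc ∑ n ∈ Finset.range (2^m),
        ∏ j ∈ Finset.range s, wal m' (vnum m' (nPoly n * q j) p) (k j)
        = ∑ n ∈ Finset.range (2^m),
            (if (∑ β ∈ Finset.range m, if n.testBit β then c β else 0) = 0
              then (1:ℝ) else -1) :=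
          Finset.sum_congr rfl (fun n hn => per_n s m m' hm' hp q k n (Finset.mem_range.mp hn))
      _ = ∑ n ∈ Finset.range (2^m), ∏ β ∈ Finset.range m, F β (n.testBit β) := by
          refine Finset.sum_congr rfl fun n hn => ?_
          rw [chi_sum]
          refine Finset.prod_congr rfl fun β hβ => ?_
          rw [hF]
          by_cases hb : n.testBit β
          · simp only [hb, if_true]
          · simp only [hb, Bool.false_eq_true, if_false, if_pos rfl]
            exact if_pos trivial
      _ = ∏ β ∈ Finset.range m, (F β false + F β true) := sum_prod_testBit m F
      _ = ∏ β ∈ Finset.range m, ((if c β = 0 then (1:ℝ) else -1) + 1) := by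
          refine Finset.prod_congr rfl fun β hβ => ?_
          rw [hF]
          norm_num
          ring
  rw [hsum]
  by_cases hd : inDual m m' s q p k
  · rw [if_pos hd]
    have hall := (equiv_dual s m m' hm hmm hp hdeg q k).mp hd
    have h2 : ∏ β ∈ Finset.range m, ((if c β = 0 then (1:ℝ) else -1) + 1) = 2^m := by
      rw [Finset.prod_congr rfl (fun β hβ => by
        rw [if_pos (hall β (Finset.mem_range.mp hβ))])]
      rw [Finset.prod_const, Finset.card_range]
      norm_num
    rw [h2]
    field_simp
  · rw [if_neg hd]
    obtain ⟨β0, hβ0, hne⟩ : ∃ β0, β0 < m ∧ c β0 ≠ 0 := by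
      by_contra hno
      push_neg at hno
      exact hd ((equiv_dual s m m' hm hmm hp hdeg q k).mpr hno)
    rw [Finset.prod_eq_zero (Finset.mem_range.mpr hβ0) (by rw [if_neg hne]; norm_num)]
    ring

end Stmt16Aux


/-- character property of higher order polynomial lattice point sets:
2^{−m} Σ_{n<2^m} ∏_j wal_{k_j}(x_{n,j}) is 1 if k ∈ D^⊥(q,p) and 0 otherwise. -/
theorem stmt16 (s m m' : ℕ) (hs : 0 < s) (hm : 0 < m) (hmm : m ≤ m')
    (p : Polynomial (ZMod 2)) (hdeg : p.natDegree = m')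
    (q : ℕ → Polynomial (ZMod 2)) (k : ℕ → ℕ) :
    (1/(2:ℝ)^m) * ∑ n ∈ Finset.range (2^m),
        ∏ j ∈ Finset.range s, wal m' (vnum m' (nPoly n * q j) p) (k j)
      = if inDual m m' s q p k then 1 else 0 :=
  Stmt16Aux.main s m m' hs hm hmm p hdeg q k
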